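/- arXiv:2408.10626 — 2 statements merged into one kernel-verified Lean document; each statement's English description precedes it below -/
import Mathlib

section
/- Assume ℓ ≥ 2. Let λ = (λ^{(1)}, …, λ^{(ℓ)}) be an ℓ-partition and t = (t_1, …, t_ℓ) ∈ ℤ^ℓ a multicharge. Then for every j ∈ {1, …, ℓ}, core_e(λ; t + e·e_j) = core_e(λ; t), where e_j ∈ ℤ^ℓ is the j-th standard basis vector; and for every k ∈ {1, …, ℓ−1}, core_e(λ^{s_k}; t^{s_k}) = core_e(λ; t), where λ^{s_k} and t^{s_k} are obtained from λ and t by interchanging the k-th and (k+1)-th components. -/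
/-- A β-set: a subset of ℤ having a maximum element, whose complement has a minimum element. -/
def IsBetaSet (B : Set ℤ) : Prop :=
  (∃ m ∈ B, ∀ x ∈ B, x ≤ m) ∧ (∃ m, m ∉ B ∧ ∀ x, x ∉ B → m ≤ x)

/-- The charge s(B) = |B ∩ ℤ≥0| − |ℤ<0 ∖ B| of a β-set. -/
noncomputable def charge (B : Set ℤ) : ℤ :=
  ((B ∩ {x : ℤ | 0 ≤ x}).ncard : ℤ) - (({x : ℤ | x < 0} \ B).ncard : ℤ)

/-- B^{+k} = {x + k : x ∈ B}. -/
def shiftSet (B : Set ℤ) (k : ℤ) : Set ℤ := (fun x => x + k) '' B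

/-- δ_i(B) for i ∈ ℤ/eℤ. -/
noncomputable def deltaOf (e : ℕ) (i : ZMod e) (B : Set ℤ) : ℤ :=
  ({x : ℤ | x ∈ B ∧ (x : ZMod e) = i ∧ x - 1 ∉ B}.ncard : ℤ)
    - ({x : ℤ | x ∈ B ∧ (x : ZMod e) = i - 1 ∧ x + 1 ∉ B}.ncard : ℤ)

/-- The i-th component B_i = {a : ae + i ∈ B} of the e-quotient of B. -/
def quotComp (e : ℕ) (B : Set ℤ) (i : ℕ) : Set ℤ :=
  {a : ℤ | a * (e : ℤ) + (i : ℤ) ∈ B}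

/-- The e-core of B: ⋃_{i<e} {ae + i : a < s(B_i)}. -/
noncomputable def coreSet (e : ℕ) (B : Set ℤ) : Set ℤ :=
  {x : ℤ | ∃ i < e, ∃ a : ℤ, a < charge (quotComp e B i) ∧ x = a * (e : ℤ) + (i : ℤ)}

/-- The e-weight of B: for each quotient component C = B_i, the a-th term
b_{ia} − s(C) + a equals the number of y ∉ C below the a-th bead b_{ia}, so the inner sum
counts the pairs (x, y) with x ∈ C, y ∉ C, y < x. -/
noncomputable def wtSet (e : ℕ) (B : Set ℤ) : ℕ :=
  ∑ i ∈ Finset.range e,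
    {p : ℤ × ℤ | p.1 ∈ quotComp e B i ∧ p.2 ∉ quotComp e B i ∧ p.2 < p.1}.ncard

/-- υ_j(ae + b) = aeℓ + (ℓ−j)e + b. -/
def upsilon (e ℓ j : ℕ) (x : ℤ) : ℤ :=
  (x - x % (e : ℤ)) * (ℓ : ℤ) + ((ℓ : ℤ) - (j : ℤ)) * (e : ℤ) + x % (e : ℤ)

/-- The Uglov map U(B^{(1)}, …, B^{(ℓ)}) = ⋃_j υ_j(B^{(j)}) (the j-th component of the
tuple, indexed by Fin ℓ, is B^{(j+1)} of the paper). -/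
def uglovU (e ℓ : ℕ) (B : Fin ℓ → Set ℤ) : Set ℤ :=
  ⋃ j : Fin ℓ, upsilon e ℓ (j.1 + 1) '' (B j)

/-- A partition, as a weakly decreasing eventually-zero function ℕ → ℕ
(the value at a being λ_{a+1}). -/
def IsPartitionFun (p : ℕ → ℕ) : Prop :=
  (∀ a b : ℕ, a ≤ b → p b ≤ p a) ∧ ∃ N, ∀ n, N ≤ n → p n = 0

/-- β_t(λ) = {λ_a + t − a : a ≥ 1}. -/
def betaOf (p : ℕ → ℕ) (t : ℤ) : Set ℤ :=
  {x : ℤ | ∃ a : ℕ, x = (p a : ℤ) + t - ((a : ℤ) + 1)}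

-- β⁻¹(B): the unique partition λ with β_{s(B)}(λ) = B (junk value if none exists).
open Classical in
noncomputable def betaInv (B : Set ℤ) : ℕ → ℕ :=
  if h : ∃ p : ℕ → ℕ, IsPartitionFun p ∧ betaOf p (charge B) = B then h.choose
  else fun _ => 0

/-- U(β_t(λ)) for an ℓ-partition λ and multicharge t. -/
def uglovMulti (e ℓ : ℕ) (Λ : Fin ℓ → ℕ → ℕ) (t : Fin ℓ → ℤ) : Set ℤ :=
  uglovU e ℓ (fun j => betaOf (Λ j) (t j))

/-- U(λ; t) = β⁻¹(U(β_t(λ))). -/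
noncomputable def uglovPart (e ℓ : ℕ) (Λ : Fin ℓ → ℕ → ℕ) (t : Fin ℓ → ℤ) : ℕ → ℕ :=
  betaInv (uglovMulti e ℓ Λ t)

/-- core_e(λ; t) = β⁻¹(core_e(U(β_t(λ)))). -/
noncomputable def corePart (e ℓ : ℕ) (Λ : Fin ℓ → ℕ → ℕ) (t : Fin ℓ → ℤ) : ℕ → ℕ :=
  betaInv (coreSet e (uglovMulti e ℓ Λ t))

/-- wt_e(λ; t) = wt_e(U(β_t(λ))). -/
noncomputable def wtPart (e ℓ : ℕ) (Λ : Fin ℓ → ℕ → ℕ) (t : Fin ℓ → ℤ) : ℕ :=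
  wtSet e (uglovMulti e ℓ Λ t)

/-- t ∈ Ā_e^ℓ : t is weakly increasing with last entry at most first entry + e. -/
def memAbar (e : ℕ) {ℓ : ℕ} (t : Fin ℓ → ℤ) : Prop :=
  Monotone t ∧ ∀ i j : Fin ℓ, t j ≤ t i + (e : ℤ)

/-- t ∈ A_e^ℓ : t is weakly increasing with last entry at most first entry + e − 1. -/
def memA (e : ℕ) {ℓ : ℕ} (t : Fin ℓ → ℤ) : Prop :=
  Monotone t ∧ ∀ i j : Fin ℓ, t j ≤ t i + (e : ℤ) - 1

/-- δ_i^t(λ) = Σ_j δ_i(β_{t_j}(λ^{(j)})). -/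
noncomputable def deltaMulti (e ℓ : ℕ) (Λ : Fin ℓ → ℕ → ℕ) (t : Fin ℓ → ℤ) (i : ZMod e) : ℤ :=
  ∑ j : Fin ℓ, deltaOf e i (betaOf (Λ j) (t j))

/-- The Young diagram [λ] of an ℓ-partition, as a set of nodes (a, b, j). -/
def youngSet (ℓ : ℕ) (Λ : Fin ℓ → ℕ → ℕ) : Set (ℕ × ℕ × Fin ℓ) :=
  {x | 1 ≤ x.1 ∧ 1 ≤ x.2.1 ∧ x.2.1 ≤ Λ x.2.2 (x.1 - 1)}

/-- The multiplicity of i ∈ ℤ/eℤ in the residue multiset res_e^t(λ). -/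
noncomputable def resCount (e ℓ : ℕ) (Λ : Fin ℓ → ℕ → ℕ) (t : Fin ℓ → ℤ) (i : ZMod e) : ℕ :=
  {x : ℕ × ℕ × Fin ℓ | x ∈ youngSet ℓ Λ ∧
    (((x.2.1 : ℤ) - (x.1 : ℤ) + t x.2.2 : ℤ) : ZMod e) = i}.ncard

/-- The set of e-weights over the Ŵ_ℓ-orbit of (λ; t). -/
noncomputable def orbitWeights (e ℓ : ℕ) (Λ : Fin ℓ → ℕ → ℕ) (t : Fin ℓ → ℤ) : Set ℕ :=
  {n : ℕ | ∃ σ : Equiv.Perm (Fin ℓ), ∃ v : Fin ℓ → ℤ,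
    n = wtPart e ℓ (fun j => Λ (σ j)) (fun j => t (σ j) + (e : ℤ) * v j)}


/-! ### Helper lemmas -/

section Helpers

lemma mem_shiftSet {B : Set ℤ} {k x : ℤ} : x ∈ shiftSet B k ↔ x - k ∈ B := by
  constructor
  · rintro ⟨y, hy, rfl⟩; simpa using hy
  · intro h; exact ⟨x - k, h, by ring⟩

lemma shiftSet_shiftSet (B : Set ℤ) (a b : ℤ) :
    shiftSet (shiftSet B a) b = shiftSet B (a + b) := by
  ext x; simp [mem_shiftSet, sub_sub, add_comm]

lemma shiftSet_zero (B : Set ℤ) : shiftSet B 0 = B := by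
  ext x; simp [mem_shiftSet]

/-- Finiteness hypotheses making `charge` well behaved. -/
def ChargeFin (B : Set ℤ) : Prop :=
  (B ∩ {x : ℤ | 0 ≤ x}).Finite ∧ ({x : ℤ | x < 0} \ B).Finite

lemma chargeFin_shift {B : Set ℤ} (h : ChargeFin B) (k : ℤ) : ChargeFin (shiftSet B k) := by
  obtain ⟨h1, h2⟩ := h
  have habs1 : k ≤ |k| := le_abs_self k
  have habs2 : -|k| ≤ k := neg_abs_le k
  constructor
  · apply ((h1.union (Set.finite_Icc (-|k|) |k|)).image (fun x => x + k)).subset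
    rintro x ⟨hx, hx0⟩
    rw [mem_shiftSet] at hx
    refine ⟨x - k, ?_, by ring⟩
    simp only [Set.mem_setOf_eq] at hx0
    by_cases h0 : 0 ≤ x - k
    · exact Or.inl ⟨hx, h0⟩
    · exact Or.inr (by simp only [Set.mem_Icc]; omega)
  · apply ((h2.union (Set.finite_Icc (-|k|) |k|)).image (fun x => x + k)).subset
    rintro x ⟨hx0, hx⟩
    rw [mem_shiftSet] at hx
    simp only [Set.mem_setOf_eq] at hx0
    refine ⟨x - k, ?_, by ring⟩
    by_cases h0 : x - k < 0
    · exact Or.inl ⟨h0, hx⟩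
    · exact Or.inr (by simp only [Set.mem_Icc]; omega)

lemma charge_shift_nonneg {B : Set ℤ} (h : ChargeFin B) {k : ℤ} (hk : 0 ≤ k) :
    charge (shiftSet B k) = charge B + k := by
  obtain ⟨h1, h2⟩ := h
  have hinj : Function.Injective (fun x : ℤ => x + k) := add_left_injective k
  have etop : shiftSet B k ∩ {x : ℤ | 0 ≤ x} = (fun x => x + k) '' (B ∩ {x : ℤ | -k ≤ x}) := by
    ext x
    simp only [Set.mem_inter_iff, mem_shiftSet, Set.mem_setOf_eq, Set.mem_image]
    constructor
    · rintro ⟨hx, hx0⟩; exact ⟨x - k, ⟨hx, by omega⟩, by ring⟩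
    · rintro ⟨y, ⟨hy, hy0⟩, rfl⟩; exact ⟨by simpa using hy, by omega⟩
  have ebot : {x : ℤ | x < 0} \ shiftSet B k = (fun x => x + k) '' ({x : ℤ | x < -k} \ B) := by
    ext x
    simp only [Set.mem_diff, Set.mem_setOf_eq, mem_shiftSet, Set.mem_image]
    constructor
    · rintro ⟨hx0, hx⟩; exact ⟨x - k, ⟨by omega, hx⟩, by ring⟩
    · rintro ⟨y, ⟨hy0, hy⟩, rfl⟩; exact ⟨by omega, by simpa using hy⟩
  have dtop : B ∩ {x : ℤ | -k ≤ x} = (B ∩ {x : ℤ | 0 ≤ x}) ∪ (B ∩ Set.Ico (-k) 0) := by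
    ext x
    simp only [Set.mem_inter_iff, Set.mem_union, Set.mem_setOf_eq, Set.mem_Ico]
    constructor
    · rintro ⟨hB, hge⟩
      by_cases h0 : 0 ≤ x
      · exact Or.inl ⟨hB, h0⟩
      · exact Or.inr ⟨hB, hge, by omega⟩
    · rintro (⟨hB, h0⟩ | ⟨hB, h1', h2'⟩)
      · exact ⟨hB, by omega⟩
      · exact ⟨hB, h1'⟩
  have dbot : {x : ℤ | x < 0} \ B = ({x : ℤ | x < -k} \ B) ∪ (Set.Ico (-k) 0 \ B) := by
    ext x
    simp only [Set.mem_diff, Set.mem_union, Set.mem_setOf_eq, Set.mem_Ico]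
    constructor
    · rintro ⟨hx0, hx⟩
      by_cases h0 : x < -k
      · exact Or.inl ⟨h0, hx⟩
      · exact Or.inr ⟨⟨by omega, hx0⟩, hx⟩
    · rintro (⟨h0, hx⟩ | ⟨⟨h1', h2'⟩, hx⟩)
      · exact ⟨by omega, hx⟩
      · exact ⟨h2', hx⟩
  have fin1 : (B ∩ Set.Ico (-k) 0).Finite := (Set.finite_Ico _ _).subset Set.inter_subset_right
  have fin2 : (Set.Ico (-k) 0 \ B).Finite := (Set.finite_Ico _ _).subset Set.diff_subset
  have fin3 : ({x : ℤ | x < -k} \ B).Finite := h2.subset (by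
    rintro x ⟨hx1, hx2⟩
    exact ⟨by simp only [Set.mem_setOf_eq] at hx1 ⊢; omega, hx2⟩)
  have disj1 : Disjoint (B ∩ {x : ℤ | 0 ≤ x}) (B ∩ Set.Ico (-k) 0) := by
    rw [Set.disjoint_left]
    rintro x ⟨_, hx0⟩ ⟨_, hx1, hx2⟩
    simp only [Set.mem_setOf_eq] at hx0; omega
  have disj2 : Disjoint ({x : ℤ | x < -k} \ B) (Set.Ico (-k) 0 \ B) := by
    rw [Set.disjoint_left]
    rintro x ⟨hx0, _⟩ ⟨⟨hx1, _⟩, _⟩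
    simp only [Set.mem_setOf_eq] at hx0; omega
  have key : (B ∩ Set.Ico (-k) 0).ncard + (Set.Ico (-k) 0 \ B).ncard = k.toNat := by
    rw [← Set.ncard_union_eq (by
      rw [Set.disjoint_left]; rintro x ⟨_, hx⟩ ⟨_, hx'⟩; exact hx' ‹_›) fin1 fin2]
    have huni : (B ∩ Set.Ico (-k) 0) ∪ (Set.Ico (-k) 0 \ B) = Set.Ico (-k) 0 := by
      ext x
      simp only [Set.mem_union, Set.mem_inter_iff, Set.mem_diff]
      by_cases hx : x ∈ B <;> simp [hx]
    rw [huni, show (Set.Ico (-k) (0:ℤ)) = ↑(Finset.Ico (-k) (0:ℤ)) from (Finset.coe_Ico _ _).symm,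
      Set.ncard_coe_finset, Int.card_Ico]
    omega
  rw [charge, charge, etop, ebot, Set.ncard_image_of_injective _ hinj,
    Set.ncard_image_of_injective _ hinj, dtop, dbot,
    Set.ncard_union_eq disj1 h1 fin1, Set.ncard_union_eq disj2 fin3 fin2]
  omega

lemma charge_shift {B : Set ℤ} (h : ChargeFin B) (k : ℤ) :
    charge (shiftSet B k) = charge B + k := by
  rcases le_or_gt 0 k with hk | hk
  · exact charge_shift_nonneg h hk
  · have h' := chargeFin_shift h k
    have h2 := charge_shift_nonneg h' (by omega : (0:ℤ) ≤ -k)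
    rw [shiftSet_shiftSet, add_neg_cancel, shiftSet_zero] at h2
    omega

lemma betaOf_add (p : ℕ → ℕ) (t k : ℤ) : betaOf p (t + k) = shiftSet (betaOf p t) k := by
  ext x
  simp only [betaOf, Set.mem_setOf_eq, mem_shiftSet]
  constructor
  · rintro ⟨a, ha⟩; exact ⟨a, by omega⟩
  · rintro ⟨a, ha⟩; exact ⟨a, by omega⟩

lemma partitionFun_unique {p q : ℕ → ℕ} (hp : IsPartitionFun p) (hq : IsPartitionFun q)
    {t : ℤ} (h : betaOf p t = betaOf q t) : p = q := by
  have mono : ∀ r : ℕ → ℕ, IsPartitionFun r →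
      StrictMono (fun a : ℕ => ((a : ℤ) + 1) - t - (r a : ℤ)) := by
    intro r hr a b hab
    have h1 : r b ≤ r a := hr.1 a b hab.le
    have h2 : (a : ℤ) < b := by exact_mod_cast hab
    have h3 : ((r b : ℕ) : ℤ) ≤ ((r a : ℕ) : ℤ) := by exact_mod_cast h1
    simp only
    omega
  have hre : ∀ r : ℕ → ℕ,
      Set.range (fun a : ℕ => ((a : ℤ) + 1) - t - (r a : ℤ)) = Neg.neg '' betaOf r t := by
    intro r
    ext x
    simp only [Set.mem_range, Set.mem_image, betaOf, Set.mem_setOf_eq]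
    constructor
    · rintro ⟨a, rfl⟩; exact ⟨(r a : ℤ) + t - ((a : ℤ) + 1), ⟨a, rfl⟩, by ring⟩
    · rintro ⟨y, ⟨a, rfl⟩, rfl⟩; exact ⟨a, by ring⟩
  have heq := (StrictMono.range_inj (mono p hp) (mono q hq)).1 (by rw [hre, hre, h])
  funext a
  have h4 := congrFun heq a
  omega

lemma betaInv_eq_of {B : Set ℤ} {p : ℕ → ℕ} (hp : IsPartitionFun p)
    (hB : betaOf p (charge B) = B) : betaInv B = p := by
  have hex : ∃ q, IsPartitionFun q ∧ betaOf q (charge B) = B := ⟨p, hp, hB⟩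
  rw [betaInv, dif_pos hex]
  exact partitionFun_unique hex.choose_spec.1 hp (hex.choose_spec.2.trans hB.symm)

lemma betaInv_shiftSet {B : Set ℤ} (h : ChargeFin B) (k : ℤ) :
    betaInv (shiftSet B k) = betaInv B := by
  have hc := charge_shift h k
  by_cases hex : ∃ p, IsPartitionFun p ∧ betaOf p (charge B) = B
  · obtain ⟨p, hp, hB⟩ := hex
    rw [betaInv_eq_of hp hB]
    refine betaInv_eq_of hp ?_
    rw [hc, betaOf_add, hB]
  · have hex' : ¬∃ p, IsPartitionFun p ∧ betaOf p (charge (shiftSet B k)) = shiftSet B k := by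
      rintro ⟨p, hp, hB⟩
      apply hex
      refine ⟨p, hp, ?_⟩
      rw [hc, betaOf_add] at hB
      have h2 := congrArg (fun S => shiftSet S (-k)) hB
      simpa [shiftSet_shiftSet, shiftSet_zero] using h2
    rw [betaInv, betaInv, dif_neg hex, dif_neg hex']

lemma chargeFin_betaOf {p : ℕ → ℕ} (hp : IsPartitionFun p) (t : ℤ) :
    ChargeFin (betaOf p t) := by
  obtain ⟨hmono, N, hN⟩ := hp
  constructor
  · apply (Set.finite_Icc 0 ((p 0 : ℤ) + t)).subset
    rintro x ⟨hx, hx0⟩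
    obtain ⟨a, rfl⟩ := hx
    simp only [Set.mem_setOf_eq] at hx0
    have h1 : p a ≤ p 0 := hmono 0 a (Nat.zero_le a)
    have h2 : ((p a : ℕ) : ℤ) ≤ ((p 0 : ℕ) : ℤ) := by exact_mod_cast h1
    exact ⟨hx0, by omega⟩
  · apply (Set.finite_Icc (t - (N : ℤ) - 1) 0).subset
    rintro x ⟨hx0, hx⟩
    simp only [Set.mem_setOf_eq] at hx0
    refine ⟨?_, by omega⟩
    by_contra hlt
    push_neg at hlt
    apply hx
    refine ⟨(t - x - 1).toNat, ?_⟩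
    have h1 : (N : ℤ) ≤ t - x - 1 := by omega
    have h2 : ((t - x - 1).toNat : ℤ) = t - x - 1 := Int.toNat_of_nonneg (by omega)
    have h3 : p (t - x - 1).toNat = 0 := hN _ (by omega)
    rw [h3]
    omega

lemma quotComp_shift (e : ℕ) (B : Set ℤ) (i : ℕ) :
    quotComp e (shiftSet B (e : ℤ)) i = shiftSet (quotComp e B i) 1 := by
  ext a
  show a * (e : ℤ) + i ∈ shiftSet B e ↔ a ∈ shiftSet (quotComp e B i) 1
  rw [mem_shiftSet, mem_shiftSet]
  show a * (e : ℤ) + i - e ∈ B ↔ (a - 1) * (e : ℤ) + i ∈ B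
  rw [show a * (e : ℤ) + i - e = (a - 1) * e + i by ring]

lemma chargeFin_quotComp {e i : ℕ} (he : 0 < e) (hi : i < e) {B : Set ℤ}
    (h : ChargeFin B) : ChargeFin (quotComp e B i) := by
  have hen : ((e : ℤ)) ≠ 0 := by exact_mod_cast he.ne'
  have hinj : Function.Injective (fun a : ℤ => a * (e : ℤ) + i) := by
    intro a b hab
    simp only at hab
    have h1 : a * (e : ℤ) = b * e := by omega
    exact mul_right_cancel₀ hen h1
  constructor
  · apply ((h.1.preimage hinj.injOn).subset)
    rintro a ⟨ha, ha0⟩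
    simp only [Set.mem_setOf_eq] at ha0
    refine ⟨ha, ?_⟩
    have : (0:ℤ) ≤ a * e := mul_nonneg ha0 (by positivity)
    simp only [Set.mem_setOf_eq]
    positivity
  · apply ((h.2.preimage hinj.injOn).subset)
    rintro a ⟨ha0, ha⟩
    simp only [Set.mem_setOf_eq] at ha0
    refine ⟨?_, ha⟩
    simp only [Set.mem_setOf_eq]
    have h1 : a * (e : ℤ) ≤ (-1) * e := by
      apply mul_le_mul_of_nonneg_right (by omega) (by positivity)
    have h2 : (i : ℤ) < e := by exact_mod_cast hi
    linarith

lemma ncard_biUnion_finset {α ι : Type*} (s : Finset ι) (S : ι → Set α)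
    (hfin : ∀ j ∈ s, (S j).Finite)
    (hdisj : ∀ j ∈ s, ∀ k ∈ s, j ≠ k → Disjoint (S j) (S k)) :
    (⋃ j ∈ s, S j).ncard = ∑ j ∈ s, (S j).ncard := by
  classical
  induction s using Finset.induction_on with
  | empty => simp
  | @insert a s ha ih =>
    have hf2 : (⋃ x ∈ s, S x).Finite := by
      rw [← Finset.set_biUnion_coe]
      exact Set.Finite.biUnion s.finite_toSet (fun j hj => hfin j (Finset.mem_insert_of_mem hj))
    have hd : Disjoint (S a) (⋃ x ∈ s, S x) := by
      rw [Set.disjoint_left]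
      intro x hx hx'
      obtain ⟨j, hj, hxj⟩ := Set.mem_iUnion₂.1 hx'
      have hne : a ≠ j := by rintro rfl; exact ha hj
      exact (Set.disjoint_left.1 (hdisj a (Finset.mem_insert_self a s) j
        (Finset.mem_insert_of_mem hj) hne)) hx hxj
    rw [Finset.set_biUnion_insert, Finset.sum_insert ha,
      Set.ncard_union_eq hd (hfin a (Finset.mem_insert_self a s)) hf2,
      ih (fun j hj => hfin j (Finset.mem_insert_of_mem hj))
        (fun j hj k hk => hdisj j (Finset.mem_insert_of_mem hj) k (Finset.mem_insert_of_mem hk))]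

lemma ncard_iUnion_fin {α : Type*} {n : ℕ} (S : Fin n → Set α) (hfin : ∀ j, (S j).Finite)
    (hdisj : ∀ j k : Fin n, j ≠ k → Disjoint (S j) (S k)) :
    (⋃ j, S j).ncard = ∑ j, (S j).ncard := by
  rw [show (⋃ j, S j) = ⋃ j ∈ Finset.univ, S j by simp]
  exact ncard_biUnion_finset Finset.univ S (fun j _ => hfin j) (fun j _ k _ h => hdisj j k h)

lemma decomp_unique {L c c' q q' : ℤ} (hL : 0 < L) (hc : 0 ≤ c) (hc2 : c < L)
    (hc' : 0 ≤ c') (hc'2 : c' < L) (h : q * L + c = q' * L + c') : q = q' ∧ c = c' := by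
  have h1 : (q * L + c) % L = c := by
    rw [show q * L + c = c + L * q by ring, Int.add_mul_emod_self_left,
      Int.emod_eq_of_lt hc hc2]
  have h2 : (q' * L + c') % L = c' := by
    rw [show q' * L + c' = c' + L * q' by ring, Int.add_mul_emod_self_left,
      Int.emod_eq_of_lt hc' hc'2]
  have hcc : c = c' := by rw [← h1, ← h2, h]
  refine ⟨?_, hcc⟩
  have h3 : q * L = q' * L := by omega
  exact mul_right_cancel₀ hL.ne' h3

end Helpers


section Uglov

/-- The interleaving map for component `j`. -/
def gmap (ℓ : ℕ) (j : Fin ℓ) : ℤ → ℤ :=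
  fun q => q * (ℓ : ℤ) + ((ℓ : ℤ) - 1 - (j : ℤ))

lemma gmap_inj {ℓ : ℕ} (hℓ : 0 < ℓ) (j : Fin ℓ) : Function.Injective (gmap ℓ j) := by
  intro a b hab
  simp only [gmap] at hab
  have h1 : a * (ℓ : ℤ) = b * ℓ := by omega
  exact mul_right_cancel₀ (by exact_mod_cast hℓ.ne') h1

lemma gmap_c_nonneg {ℓ : ℕ} (j : Fin ℓ) : 0 ≤ (ℓ : ℤ) - 1 - (j : ℤ) := by
  have := j.isLt
  have h2 : ((j : ℕ) : ℤ) < (ℓ : ℤ) := by exact_mod_cast this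
  omega

lemma gmap_c_lt {ℓ : ℕ} (hℓ : 0 < ℓ) (j : Fin ℓ) : (ℓ : ℤ) - 1 - (j : ℤ) < (ℓ : ℤ) := by
  have h0 : (0:ℤ) ≤ ((j : ℕ) : ℤ) := by positivity
  omega

lemma gmap_disjoint {ℓ : ℕ} (hℓ : 0 < ℓ) {j k : Fin ℓ} (hjk : j ≠ k) (S T : Set ℤ) :
    Disjoint (gmap ℓ j '' S) (gmap ℓ k '' T) := by
  rw [Set.disjoint_left]
  rintro x ⟨q, _, rfl⟩ ⟨q', _, heq⟩
  have hL : (0:ℤ) < (ℓ : ℤ) := by exact_mod_cast hℓ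
  obtain ⟨_, h2⟩ := decomp_unique hL (gmap_c_nonneg k) (gmap_c_lt hℓ k)
    (gmap_c_nonneg j) (gmap_c_lt hℓ j) heq
  apply hjk
  apply Fin.ext
  have : ((j : ℕ) : ℤ) = ((k : ℕ) : ℤ) := by omega
  exact_mod_cast this

lemma gmap_nonneg_iff {ℓ : ℕ} (hℓ : 0 < ℓ) (j : Fin ℓ) (q : ℤ) :
    0 ≤ gmap ℓ j q ↔ 0 ≤ q := by
  have hL : (0:ℤ) < (ℓ : ℤ) := by exact_mod_cast hℓ
  have hc0 := gmap_c_nonneg j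
  have hcl := gmap_c_lt hℓ j
  simp only [gmap]
  constructor
  · intro h
    by_contra hq
    push_neg at hq
    have h1 : q * (ℓ : ℤ) ≤ (-1) * ℓ := mul_le_mul_of_nonneg_right (by omega) hL.le
    linarith
  · intro h
    have h1 : (0:ℤ) ≤ q * ℓ := mul_nonneg h hL.le
    linarith

lemma interleave_charge {ℓ : ℕ} (hℓ : 0 < ℓ) (D : Fin ℓ → Set ℤ)
    (hD : ∀ j, ChargeFin (D j)) :
    charge (⋃ j, gmap ℓ j '' D j) = ∑ j, charge (D j) := by
  have hL : (0:ℤ) < (ℓ : ℤ) := by exact_mod_cast hℓ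
  have etop : (⋃ j, gmap ℓ j '' D j) ∩ {x : ℤ | 0 ≤ x}
      = ⋃ j, gmap ℓ j '' (D j ∩ {x : ℤ | 0 ≤ x}) := by
    ext x
    simp only [Set.mem_inter_iff, Set.mem_iUnion, Set.mem_image, Set.mem_setOf_eq]
    constructor
    · rintro ⟨⟨j, q, hq, rfl⟩, hx0⟩
      exact ⟨j, q, ⟨hq, (gmap_nonneg_iff hℓ j q).1 hx0⟩, rfl⟩
    · rintro ⟨j, q, ⟨hq, hq0⟩, rfl⟩
      exact ⟨⟨j, q, hq, rfl⟩, (gmap_nonneg_iff hℓ j q).2 hq0⟩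
  have ebot : {x : ℤ | x < 0} \ (⋃ j, gmap ℓ j '' D j)
      = ⋃ j, gmap ℓ j '' ({q : ℤ | q < 0} \ D j) := by
    ext x
    simp only [Set.mem_diff, Set.mem_setOf_eq, Set.mem_iUnion, Set.mem_image]
    constructor
    · rintro ⟨hx0, hx⟩
      have hr0 : 0 ≤ x % ℓ := Int.emod_nonneg x hL.ne'
      have hrl : x % ℓ < ℓ := Int.emod_lt_of_pos x hL
      have hdm := Int.mul_ediv_add_emod x ℓ
      have hjnl : ℓ - 1 - (x % ℓ).toNat < ℓ := by omega
      set j : Fin ℓ := ⟨ℓ - 1 - (x % ℓ).toNat, hjnl⟩ with hj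
      have hcj : (ℓ : ℤ) - 1 - (j : ℤ) = x % ℓ := by
        simp only [hj]
        omega
      have hgx : gmap ℓ j (x / ℓ) = x := by
        simp only [gmap, hcj]
        linarith [mul_comm (x / ℓ) (ℓ : ℤ)]
      have hqneg : x / ℓ < 0 := by
        by_contra hq
        push_neg at hq
        have := (gmap_nonneg_iff hℓ j (x / ℓ)).2 hq
        rw [hgx] at this
        omega
      refine ⟨j, x / ℓ, ⟨hqneg, ?_⟩, hgx⟩
      intro hmem
      exact hx ⟨j, x / ℓ, hmem, hgx⟩
    · rintro ⟨j, q, ⟨hq0, hq⟩, rfl⟩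
      constructor
      · by_contra hx
        push_neg at hx
        have := (gmap_nonneg_iff hℓ j q).1 hx
        omega
      · rintro ⟨k, q', hq', heq⟩
        obtain ⟨h1, h2⟩ := decomp_unique hL (gmap_c_nonneg k) (gmap_c_lt hℓ k)
          (gmap_c_nonneg j) (gmap_c_lt hℓ j) heq
        have hkj : k = j := by
          apply Fin.ext
          have : ((k : ℕ) : ℤ) = ((j : ℕ) : ℤ) := by omega
          exact_mod_cast this
        subst hkj
        rw [h1] at hq'
        exact hq hq'
  rw [charge, etop, ebot,
    ncard_iUnion_fin _ (fun j => ((hD j).1.image _))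
      (fun j k h => gmap_disjoint hℓ h _ _),
    ncard_iUnion_fin _ (fun j => ((hD j).2.image _))
      (fun j k h => gmap_disjoint hℓ h _ _)]
  push_cast
  rw [← Finset.sum_sub_distrib]
  apply Finset.sum_congr rfl
  intro j _
  rw [Set.ncard_image_of_injective _ (gmap_inj hℓ j),
    Set.ncard_image_of_injective _ (gmap_inj hℓ j)]
  rfl

lemma quot_uglov {e ℓ : ℕ} (he : 0 < e) (hℓ : 0 < ℓ) (B : Fin ℓ → Set ℤ) {i : ℕ}
    (hi : i < e) :
    quotComp e (uglovU e ℓ B) i = ⋃ j : Fin ℓ, gmap ℓ j '' quotComp e (B j) i := by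
  have hE : (0:ℤ) < (e : ℤ) := by exact_mod_cast he
  have hiz : (i : ℤ) < (e : ℤ) := by exact_mod_cast hi
  ext a
  simp only [quotComp, uglovU, Set.mem_setOf_eq, Set.mem_iUnion, Set.mem_image]
  constructor
  · rintro ⟨j, x, hx, heq⟩
    simp only [upsilon] at heq
    have hr0 : 0 ≤ x % e := Int.emod_nonneg x hE.ne'
    have hrl : x % e < e := Int.emod_lt_of_pos x hE
    have hxe : x - x % e = e * (x / e) := by
      have := Int.mul_ediv_add_emod x e
      omega
    rw [hxe] at heq
    have heq' : ((x / e) * ℓ + ((ℓ : ℤ) - 1 - (j : ℤ))) * e + x % e = a * e + i := by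
      push_cast at heq ⊢
      linear_combination heq
    obtain ⟨h1, h2⟩ := decomp_unique hE hr0 hrl (by positivity) hiz heq'
    refine ⟨j, x / e, ?_, h1⟩
    show (x / e) * (e : ℤ) + i ∈ B j
    have hxx : (x / e) * (e : ℤ) + i = x := by
      have := Int.mul_ediv_add_emod x e
      linarith [mul_comm (x / e) (e : ℤ)]
    rw [hxx]
    exact hx
  · rintro ⟨j, q, hq, rfl⟩
    refine ⟨j, q * e + i, hq, ?_⟩
    simp only [upsilon]
    have hmod : (q * (e : ℤ) + i) % e = i := by
      rw [show q * (e : ℤ) + i = i + e * q by ring, Int.add_mul_emod_self_left,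
        Int.emod_eq_of_lt (by positivity) hiz]
    rw [hmod]
    simp only [gmap]
    push_cast
    ring

end Uglov

section Core

lemma coreSet_congr {e : ℕ} {B B' : Set ℤ}
    (h : ∀ i < e, charge (quotComp e B' i) = charge (quotComp e B i)) :
    coreSet e B' = coreSet e B := by
  ext x
  simp only [coreSet, Set.mem_setOf_eq]
  constructor
  · rintro ⟨i, hi, a, ha, rfl⟩
    exact ⟨i, hi, a, by rw [← h i hi]; exact ha, rfl⟩
  · rintro ⟨i, hi, a, ha, rfl⟩
    exact ⟨i, hi, a, by rw [h i hi]; exact ha, rfl⟩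

lemma coreSet_shift {e : ℕ} {B B' : Set ℤ}
    (h : ∀ i < e, charge (quotComp e B' i) = charge (quotComp e B i) + 1) :
    coreSet e B' = shiftSet (coreSet e B) (e : ℤ) := by
  ext x
  simp only [coreSet, mem_shiftSet, Set.mem_setOf_eq]
  constructor
  · rintro ⟨i, hi, a, ha, rfl⟩
    refine ⟨i, hi, a - 1, by rw [h i hi] at ha; omega, by ring⟩
  · rintro ⟨i, hi, a, ha, hx⟩
    refine ⟨i, hi, a + 1, by rw [h i hi]; omega, by linear_combination hx⟩

lemma chargeFin_coreSet {e : ℕ} (he : 0 < e) (B : Set ℤ) : ChargeFin (coreSet e B) := by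
  have hE : (0:ℤ) < (e : ℤ) := by exact_mod_cast he
  set Sg : ℤ := ∑ i ∈ Finset.range e, |charge (quotComp e B i)| with hSg
  have hSg0 : 0 ≤ Sg := Finset.sum_nonneg (fun i _ => abs_nonneg _)
  set M : ℤ := (Sg + 1) * e with hM
  have hM0 : 0 ≤ M := mul_nonneg (by omega) hE.le
  have habs : ∀ i < e, |charge (quotComp e B i)| ≤ Sg :=
    fun i hi => Finset.single_le_sum (fun i _ => abs_nonneg (charge (quotComp e B i)))
      (Finset.mem_range.2 hi)
  constructor
  · apply (Set.finite_Icc (-M) M).subset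
    rintro x ⟨hx, hx0⟩
    obtain ⟨i, hi, a, ha, rfl⟩ := hx
    simp only [Set.mem_setOf_eq] at hx0
    have h1 := habs i hi
    have hie : (i : ℤ) < e := by exact_mod_cast hi
    have ha' : a ≤ |charge (quotComp e B i)| := le_trans (by omega) (le_abs_self _)
    have haM : a * (e : ℤ) ≤ |charge (quotComp e B i)| * e :=
      mul_le_mul_of_nonneg_right ha' hE.le
    have haM2 : |charge (quotComp e B i)| * (e : ℤ) ≤ Sg * e :=
      mul_le_mul_of_nonneg_right h1 hE.le
    constructor
    · omega
    · have : Sg * (e : ℤ) + e = M := by rw [hM]; ring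
      omega
  · apply (Set.finite_Icc (-M) M).subset
    rintro x ⟨hx0, hx⟩
    simp only [Set.mem_setOf_eq] at hx0
    have hdm := Int.mul_ediv_add_emod x e
    have hr0 : 0 ≤ x % e := Int.emod_nonneg x hE.ne'
    have hrl : x % e < e := Int.emod_lt_of_pos x hE
    set i : ℕ := (x % e).toNat with hi
    have hie : i < e := by omega
    have hiz : ((i : ℕ) : ℤ) = x % e := Int.toNat_of_nonneg hr0
    have hna : ¬(x / e < charge (quotComp e B i)) := by
      intro hlt
      apply hx
      refine ⟨i, hie, x / e, hlt, ?_⟩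
      rw [hiz]
      linarith [mul_comm (x / e) (e : ℤ)]
    push_neg at hna
    have h1 := habs i hie
    have h2 : -|charge (quotComp e B i)| ≤ charge (quotComp e B i) := neg_abs_le _
    have h3 : (-Sg) * (e : ℤ) ≤ (x / e) * e := by
      apply mul_le_mul_of_nonneg_right (by omega) hE.le
    have h4 : (x / e) * (e : ℤ) ≤ x := by
      rw [mul_comm]
      omega
    constructor
    · have : -M ≤ (-Sg) * (e : ℤ) := by rw [hM]; nlinarith
      omega
    · omega

end Core

/-- core_e(λ; t + e·e_j) = core_e(λ; t) for every j, and
core_e(λ^{s_k}; t^{s_k}) = core_e(λ; t) for every adjacent transposition s_k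
(0-indexed: s_k swaps the entries at positions k and k+1 of Fin ℓ). -/
theorem stmt10 (e ℓ : ℕ) (he : 2 ≤ e) (hl : 2 ≤ ℓ) (Λ : Fin ℓ → ℕ → ℕ)
    (hΛ : ∀ j, IsPartitionFun (Λ j)) (t : Fin ℓ → ℤ) :
    (∀ j : Fin ℓ,
      corePart e ℓ Λ (fun j' => t j' + if j' = j then (e : ℤ) else 0) = corePart e ℓ Λ t) ∧
    (∀ k : ℕ, ∀ hk : k + 1 < ℓ,
      corePart e ℓ
        (fun j => Λ (Equiv.swap (⟨k, Nat.lt_of_succ_lt hk⟩ : Fin ℓ) ⟨k + 1, hk⟩ j))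
        (fun j => t (Equiv.swap (⟨k, Nat.lt_of_succ_lt hk⟩ : Fin ℓ) ⟨k + 1, hk⟩ j)) =
      corePart e ℓ Λ t) := by
  have he0 : 0 < e := by omega
  have hl0 : 0 < ℓ := by omega
  have hqc : ∀ (Λ' : Fin ℓ → ℕ → ℕ), (∀ j, IsPartitionFun (Λ' j)) →
      ∀ (t' : Fin ℓ → ℤ), ∀ i < e,
      charge (quotComp e (uglovMulti e ℓ Λ' t') i)
        = ∑ j, charge (quotComp e (betaOf (Λ' j) (t' j)) i) := by
    intro Λ' hΛ' t' i hi
    rw [uglovMulti, show uglovU e ℓ (fun j => betaOf (Λ' j) (t' j))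
        = ⋃ j, upsilon e ℓ (j.1 + 1) '' (betaOf (Λ' j) (t' j)) from rfl]
    rw [← show uglovU e ℓ (fun j => betaOf (Λ' j) (t' j))
        = ⋃ j, upsilon e ℓ (j.1 + 1) '' (betaOf (Λ' j) (t' j)) from rfl]
    rw [quot_uglov he0 hl0 _ hi]
    exact interleave_charge hl0 _
      (fun j => chargeFin_quotComp he0 hi (chargeFin_betaOf (hΛ' j) (t' j)))
  constructor
  · intro j
    set t' : Fin ℓ → ℤ := fun j' => t j' + if j' = j then (e : ℤ) else 0 with ht'
    have hch : ∀ i < e, charge (quotComp e (uglovMulti e ℓ Λ t') i)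
        = charge (quotComp e (uglovMulti e ℓ Λ t) i) + 1 := by
      intro i hi
      rw [hqc Λ hΛ t' i hi, hqc Λ hΛ t i hi]
      have term : ∀ j' : Fin ℓ, charge (quotComp e (betaOf (Λ j') (t' j')) i)
          = charge (quotComp e (betaOf (Λ j') (t j')) i) + (if j' = j then 1 else 0) := by
        intro j'
        by_cases hj : j' = j
        · subst hj
          simp only [eq_self_iff_true, if_true]
          rw [show t' j' = t j' + e by simp [ht'], betaOf_add, quotComp_shift,
            charge_shift (chargeFin_quotComp he0 hi (chargeFin_betaOf (hΛ j') (t j'))) 1]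
        · simp only [if_neg hj, add_zero]
          rw [show t' j' = t j' by simp [ht', hj]]
      rw [Finset.sum_congr rfl (fun j' _ => term j'), Finset.sum_add_distrib]
      congr 1
      simp
    have hcore : coreSet e (uglovMulti e ℓ Λ t')
        = shiftSet (coreSet e (uglovMulti e ℓ Λ t)) (e : ℤ) := coreSet_shift hch
    show betaInv (coreSet e (uglovMulti e ℓ Λ t')) = betaInv (coreSet e (uglovMulti e ℓ Λ t))
    rw [hcore, betaInv_shiftSet (chargeFin_coreSet he0 _) (e : ℤ)]
  · intro k hk
    set σ : Equiv.Perm (Fin ℓ) := Equiv.swap (⟨k, Nat.lt_of_succ_lt hk⟩ : Fin ℓ) ⟨k + 1, hk⟩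
      with hσ
    have hch : ∀ i < e,
        charge (quotComp e (uglovMulti e ℓ (fun j => Λ (σ j)) (fun j => t (σ j))) i)
          = charge (quotComp e (uglovMulti e ℓ Λ t) i) := by
      intro i hi
      rw [hqc _ (fun j => hΛ (σ j)) _ i hi, hqc Λ hΛ t i hi]
      exact Equiv.sum_comp σ (fun j => charge (quotComp e (betaOf (Λ j) (t j)) i))
    exact congrArg betaInv (coreSet_congr hch)
end

section
/- Assume ℓ ≥ 2. Let λ be an ℓ-partition and t = (t_1, …, t_ℓ) ∈ ℤ^ℓ a multicharge. Then wt_e(λ; (t_1 + 1, t_2 + 1, …, t_ℓ + 1)) = wt_e(λ; t). -/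
noncomputable def Gmap (e ℓ : ℕ) (z : ℤ) : ℤ :=
  if z % (e : ℤ) = (e : ℤ) - 1 then z + (e : ℤ) * (ℓ : ℤ) - (e : ℤ) + 1 else z + 1

lemma upsilon_succ (e ℓ j : ℕ) (he : 2 ≤ e) (x : ℤ) :
    upsilon e ℓ j (x + 1) = Gmap e ℓ (upsilon e ℓ j x) := by
  have hepos : (0:ℤ) < (e:ℤ) := by exact_mod_cast (by omega : 0 < e)
  have h0 : 0 ≤ x % (e:ℤ) := Int.emod_nonneg x (by omega)
  have h1 : x % (e:ℤ) < (e:ℤ) := Int.emod_lt_of_pos x hepos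
  have hx : (e:ℤ) * (x / (e:ℤ)) + x % (e:ℤ) = x := Int.mul_ediv_add_emod x e
  set q := x / (e:ℤ) with hq
  set r := x % (e:ℤ) with hr
  have hxr : x - r = (e:ℤ) * q := by omega
  have hux : upsilon e ℓ j x = (x - r) * ℓ + ((ℓ:ℤ) - (j:ℤ)) * (e:ℤ) + r := by
    unfold upsilon; rw [← hr]
  have hmod : upsilon e ℓ j x % (e:ℤ) = r := by
    have h2 : upsilon e ℓ j x = r + (e:ℤ) * (q * ℓ + ((ℓ:ℤ) - (j:ℤ))) := by
      rw [hux, hxr]; ring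
    rw [h2, Int.add_mul_emod_self_left]
    exact Int.emod_eq_of_lt h0 h1
  by_cases hcase : r = (e:ℤ) - 1
  · have he1 : (e:ℤ) * (q + 1) = (e:ℤ) * q + (e:ℤ) := by ring
    have hx1 : x + 1 = (e:ℤ) * (q + 1) := by omega
    have hm1 : (x + 1) % (e:ℤ) = 0 := by rw [hx1]; exact Int.mul_emod_right _ _
    have hlhs : upsilon e ℓ j (x + 1) = (x + 1) * ℓ + ((ℓ:ℤ) - (j:ℤ)) * (e:ℤ) := by
      unfold upsilon; rw [hm1]; ring
    unfold Gmap
    rw [hmod, if_pos hcase, hlhs, hux, hcase]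
    ring
  · have hm1 : (x + 1) % (e:ℤ) = r + 1 := by
      have h2 : x + 1 = (r + 1) + (e:ℤ) * q := by omega
      rw [h2, Int.add_mul_emod_self_left]
      exact Int.emod_eq_of_lt (by omega) (by omega)
    have hlhs : upsilon e ℓ j (x + 1) = upsilon e ℓ j x + 1 := by
      unfold upsilon; rw [hm1, ← hr]; ring
    unfold Gmap
    rw [hmod, if_neg hcase, hlhs]

lemma quot_G_pos (e ℓ : ℕ) (he : 2 ≤ e) (S : Set ℤ) (i : ℕ) (hi1 : 1 ≤ i) (hie : i < e) :
    quotComp e (Gmap e ℓ '' S) i = quotComp e S (i - 1) := by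
  have hi1' : ((i - 1 : ℕ) : ℤ) = (i : ℤ) - 1 := by push_cast [hi1]; omega
  ext a
  simp only [quotComp, Set.mem_setOf_eq, Set.mem_image]
  constructor
  · rintro ⟨z, hz, hG⟩
    unfold Gmap at hG
    by_cases hc : z % (e:ℤ) = (e:ℤ) - 1
    · rw [if_pos hc] at hG
      exfalso
      have hz' : z = a * e + i - (e:ℤ) * ℓ + (e:ℤ) - 1 := by omega
      have : z % (e:ℤ) = (i:ℤ) - 1 := by
        have h2 : z = ((i:ℤ) - 1) + (e:ℤ) * (a - ℓ + 1) := by rw [hz']; ring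
        rw [h2, Int.add_mul_emod_self_left]
        have hil : (1:ℤ) ≤ i := by exact_mod_cast hi1
        have hie' : (i:ℤ) < e := by exact_mod_cast hie
        exact Int.emod_eq_of_lt (by omega) (by omega)
      have hie' : (i:ℤ) < e := by exact_mod_cast hie
      omega
    · rw [if_neg hc] at hG
      have : z = a * e + ((i - 1 : ℕ) : ℤ) := by rw [hi1']; omega
      rwa [← this]
  · intro hz
    refine ⟨a * e + ((i - 1 : ℕ) : ℤ), hz, ?_⟩
    have hmod : (a * e + ((i - 1 : ℕ) : ℤ)) % (e:ℤ) = (i:ℤ) - 1 := by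
      rw [hi1']
      have h2 : a * (e:ℤ) + ((i:ℤ) - 1) = ((i:ℤ) - 1) + (e:ℤ) * a := by ring
      rw [h2, Int.add_mul_emod_self_left]
      have hil : (1:ℤ) ≤ i := by exact_mod_cast hi1
      have hie' : (i:ℤ) < e := by exact_mod_cast hie
      exact Int.emod_eq_of_lt (by omega) (by omega)
    unfold Gmap
    have hie' : (i:ℤ) < e := by exact_mod_cast hie
    rw [hmod, if_neg (by omega), hi1']
    ring

lemma quot_G_zero (e ℓ : ℕ) (he : 2 ≤ e) (S : Set ℤ) :
    quotComp e (Gmap e ℓ '' S) 0 = (fun a => a + (ℓ:ℤ)) '' quotComp e S (e - 1) := by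
  have he1' : ((e - 1 : ℕ) : ℤ) = (e : ℤ) - 1 := by push_cast [(by omega : 1 ≤ e)]; omega
  have hee : (2:ℤ) ≤ e := by exact_mod_cast he
  ext a
  simp only [quotComp, Set.mem_setOf_eq, Set.mem_image]
  constructor
  · rintro ⟨z, hz, hG⟩
    unfold Gmap at hG
    by_cases hc : z % (e:ℤ) = (e:ℤ) - 1
    · rw [if_pos hc] at hG
      refine ⟨a - ℓ, ?_, by ring⟩
      have : z = (a - ℓ) * e + ((e - 1 : ℕ) : ℤ) := by rw [he1']; push_cast at hG ⊢; nlinarith [hG]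
      rwa [← this]
    · rw [if_neg hc] at hG
      exfalso
      have hz' : z = ((e:ℤ) - 1) + (e:ℤ) * (a - 1) := by push_cast at hG ⊢; nlinarith [hG]
      have : z % (e:ℤ) = (e:ℤ) - 1 := by
        rw [hz', Int.add_mul_emod_self_left]
        exact Int.emod_eq_of_lt (by omega) (by omega)
      exact hc this
  · rintro ⟨b, hb, rfl⟩
    refine ⟨b * e + ((e - 1 : ℕ) : ℤ), hb, ?_⟩
    have hmod : (b * e + ((e - 1 : ℕ) : ℤ)) % (e:ℤ) = (e:ℤ) - 1 := by
      rw [he1']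
      have h2 : b * (e:ℤ) + ((e:ℤ) - 1) = ((e:ℤ) - 1) + (e:ℤ) * b := by ring
      rw [h2, Int.add_mul_emod_self_left]
      exact Int.emod_eq_of_lt (by omega) (by omega)
    unfold Gmap
    rw [hmod, if_pos rfl, he1']
    push_cast
    ring


lemma pairs_shift (C : Set ℤ) (k : ℤ) :
    {p : ℤ × ℤ | p.1 ∈ (fun a => a + k) '' C ∧ p.2 ∉ (fun a => a + k) '' C ∧ p.2 < p.1}.ncard
      = {p : ℤ × ℤ | p.1 ∈ C ∧ p.2 ∉ C ∧ p.2 < p.1}.ncard := by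
  have himg : {p : ℤ × ℤ | p.1 ∈ (fun a => a + k) '' C ∧ p.2 ∉ (fun a => a + k) '' C ∧ p.2 < p.1}
      = (fun p : ℤ × ℤ => (p.1 + k, p.2 + k)) '' {p : ℤ × ℤ | p.1 ∈ C ∧ p.2 ∉ C ∧ p.2 < p.1} := by
    ext ⟨x, y⟩
    simp only [Set.mem_setOf_eq, Set.mem_image, Prod.mk.injEq, Prod.exists]
    constructor
    · rintro ⟨hx, hy, hlt⟩
      obtain ⟨x', hx', rfl⟩ := hx
      refine ⟨x', y - k, ⟨hx', ?_, by omega⟩, rfl, by ring⟩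
      intro hy'
      exact hy ⟨y - k, hy', by ring⟩
    · rintro ⟨x', y', ⟨hx', hy', hlt⟩, rfl, rfl⟩
      refine ⟨⟨x', hx', rfl⟩, ?_, by omega⟩
      rintro ⟨y'', hy'', hk⟩
      have hyy : y'' = y' := by omega
      exact hy' (hyy ▸ hy'')
  rw [himg, Set.ncard_image_of_injective]
  intro p q h
  simp only [Prod.mk.injEq] at h
  obtain ⟨h1, h2⟩ := h
  exact Prod.ext (by omega) (by omega)

lemma beta_shift (p : ℕ → ℕ) (t : ℤ) : betaOf p (t + 1) = (fun x => x + 1) '' betaOf p t := by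
  ext x
  simp only [betaOf, Set.mem_setOf_eq, Set.mem_image]
  constructor
  · rintro ⟨a, rfl⟩; exact ⟨(p a : ℤ) + t - ((a : ℤ) + 1), ⟨a, rfl⟩, by ring⟩
  · rintro ⟨y, ⟨a, rfl⟩, rfl⟩; exact ⟨a, by ring⟩

lemma uglov_shift (e ℓ : ℕ) (he : 2 ≤ e) (Λ : Fin ℓ → ℕ → ℕ) (t : Fin ℓ → ℤ) :
    uglovMulti e ℓ Λ (fun j => t j + 1) = Gmap e ℓ '' uglovMulti e ℓ Λ t := by
  unfold uglovMulti uglovU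
  rw [Set.image_iUnion]
  apply Set.iUnion_congr
  intro j
  show upsilon e ℓ (j.1 + 1) '' betaOf (Λ j) (t j + 1)
      = Gmap e ℓ '' (upsilon e ℓ (j.1 + 1) '' betaOf (Λ j) (t j))
  rw [beta_shift, ← Set.image_comp, ← Set.image_comp]
  apply Set.image_congr'
  intro x
  exact upsilon_succ e ℓ (j.1 + 1) he x

/-- wt_e(λ; (t_1 + 1, …, t_ℓ + 1)) = wt_e(λ; t). -/
theorem stmt13 (e ℓ : ℕ) (he : 2 ≤ e) (hl : 2 ≤ ℓ) (Λ : Fin ℓ → ℕ → ℕ)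
    (hΛ : ∀ j, IsPartitionFun (Λ j)) (t : Fin ℓ → ℤ) :
    wtPart e ℓ Λ (fun j => t j + 1) = wtPart e ℓ Λ t := by
  unfold wtPart wtSet
  rw [uglov_shift e ℓ he Λ t]
  obtain ⟨m, rfl⟩ : ∃ m, e = m + 1 := ⟨e - 1, by omega⟩
  set S := uglovMulti (m + 1) ℓ Λ t with hS
  rw [Finset.sum_range_succ', Finset.sum_range_succ]
  congr 1
  · apply Finset.sum_congr rfl
    intro i hi
    have hi' : i < m := Finset.mem_range.mp hi
    rw [quot_G_pos (m + 1) ℓ he S (i + 1) (by omega) (by omega)]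
    simp
  · rw [quot_G_zero (m + 1) ℓ he S]
    have hm : m + 1 - 1 = m := rfl
    rw [hm, pairs_shift]
end
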